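/- With notation as above and q = q₁q₂ a product of distinct primes, if t satisfies gcd(t, q) = q₁ (i.e., t = t'q₁ with gcd(t', q₂) = 1), then det(zI - g^t)·det(zI - ḡ^t) = Ψ_{q₂}(z)^{q₁ - 1}. -/
import Mathlib

open Finset

/-- The 2×2 rotation matrix by angle `2πν`, viewed over `ℂ`. -/
noncomputable def Rot (ν : ℝ) : Matrix (Fin 2) (Fin 2) ℂ :=
  !![(Real.cos (2 * Real.pi * ν) : ℂ), (Real.sin (2 * Real.pi * ν) : ℂ);
     (-Real.sin (2 * Real.pi * ν) : ℂ), (Real.cos (2 * Real.pi * ν) : ℂ)]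

/-- The block-diagonal matrix with rotation blocks `Rot (v j / q)`. -/
noncomputable def blockRot {n : ℕ} (q : ℕ) (v : Fin n → ℤ) :
    Matrix (Fin 2 × Fin n) (Fin 2 × Fin n) ℂ :=
  Matrix.blockDiagonal (fun j => Rot ((v j : ℝ) / q))

lemma Rot_mul (a b : ℝ) : Rot a * Rot b = Rot (a + b) := by
  simp only [Rot]
  ext i j
  fin_cases i <;> fin_cases j <;>
    simp [Matrix.mul_apply, Fin.sum_univ_two, mul_add, Real.cos_add, Real.sin_add] <;>
    push_cast <;> ring

lemma Rot_zero : Rot 0 = 1 := by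
  simp only [Rot]
  ext i j
  fin_cases i <;> fin_cases j <;> simp [Matrix.one_apply]

lemma Rot_pow (a : ℝ) (t : ℕ) : (Rot a) ^ t = Rot (t * a) := by
  induction t with
  | zero => simp [Rot_zero]
  | succ m ih => rw [pow_succ, ih, Rot_mul]; push_cast; ring_nf

lemma det_smul_one_sub_Rot (z : ℂ) (a : ℝ) :
    (z • (1 : Matrix (Fin 2) (Fin 2) ℂ) - Rot a).det
      = (z - Complex.exp (2 * Real.pi * a * Complex.I)) *
        (z - Complex.exp (-(2 * Real.pi * a) * Complex.I)) := by
  rw [Complex.exp_mul_I, Complex.exp_mul_I]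
  simp only [Rot, Matrix.det_fin_two, Matrix.sub_apply, Matrix.smul_apply, Matrix.one_apply]
  push_cast
  simp
  ring_nf
  rw [Complex.I_sq]
  ring

noncomputable def eN (N : ℕ) (m : ℤ) : ℂ :=
  Complex.exp (2 * Real.pi * ((m : ℝ) / N) * Complex.I)

lemma eN_congr {N : ℕ} (hN : N ≠ 0) {m m' : ℤ} (h : (m : ZMod N) = (m' : ZMod N)) :
    eN N m = eN N m' := by
  rw [ZMod.intCast_eq_intCast_iff] at h
  obtain ⟨c, hc⟩ := h.symm.dvd
  have hm : m = m' + N * c := by omega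
  have hN' : (N : ℂ) ≠ 0 := Nat.cast_ne_zero.mpr hN
  rw [eN, eN, hm]
  push_cast
  rw [add_div, mul_add, add_mul, Complex.exp_add, mul_div_cancel_left₀ _ hN']
  have : (2 * Real.pi * c : ℂ) * Complex.I = (c : ℤ) * (2 * Real.pi * Complex.I) := by
    push_cast; ring
  rw [this, Complex.exp_int_mul_two_pi_mul_I, mul_one]

lemma eN_cast {N : ℕ} (hN : N ≠ 0) (m : ℤ) :
    eN N m = eN N (((m : ZMod N)).val : ℤ) := by
  haveI : NeZero N := ⟨hN⟩
  refine eN_congr hN ?_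
  rw [Int.cast_natCast, ZMod.natCast_val, ZMod.cast_id]

lemma eN_mul_left {N₁ N₂ : ℕ} (h₁ : N₁ ≠ 0) (m : ℤ) :
    eN (N₁ * N₂) (N₁ * m) = eN N₂ m := by
  have hN : (N₁ : ℂ) ≠ 0 := Nat.cast_ne_zero.mpr h₁
  rw [eN, eN]
  congr 3
  push_cast
  rw [mul_div_mul_left _ _ hN]

lemma det_block (q : ℕ) (t : ℕ) (z : ℂ) {m : ℕ} (v : Fin m → ℤ) :
    (z • (1 : Matrix (Fin 2 × Fin m) (Fin 2 × Fin m) ℂ) - (blockRot q v) ^ t).det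
      = ∏ j : Fin m, ((z - eN q (t * v j)) * (z - eN q (-(t * v j)))) := by
  rw [blockRot, ← Matrix.blockDiagonal_pow, ← Matrix.blockDiagonal_one,
    ← Matrix.blockDiagonal_smul, ← Matrix.blockDiagonal_sub, Matrix.det_blockDiagonal]
  refine Finset.prod_congr rfl fun j _ => ?_
  have : ((fun j => Rot ((v j : ℝ) / q)) ^ t) j = Rot ((v j : ℝ) / q) ^ t := rfl
  rw [Pi.sub_apply, Pi.smul_apply, Pi.one_apply, this, Rot_pow, det_smul_one_sub_Rot]
  rw [eN, eN]
  congr 3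
  · push_cast; ring
  · push_cast; ring

theorem det_mul_det_eq_cyclotomic_semiprime (q₁ q₂ : ℕ) (hq₁ : Nat.Prime q₁)
    (hq₂ : Nat.Prime q₂) (hne : q₁ ≠ q₂) (q : ℕ) (hq : q = q₁ * q₂) (n k : ℕ)
    (r : Fin n → ℤ) (s : Fin k → ℤ)
    (hinj : Function.Injective (fun p : (Fin n ⊕ Fin k) × Bool =>
      (if p.2 then ((Sum.elim r s p.1 : ℤ) : ZMod q)
        else -((Sum.elim r s p.1 : ℤ) : ZMod q))))
    (hrange : Set.range (fun p : (Fin n ⊕ Fin k) × Bool =>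
      (if p.2 then ((Sum.elim r s p.1 : ℤ) : ZMod q)
        else -((Sum.elim r s p.1 : ℤ) : ZMod q))) = {x : ZMod q | IsUnit x})
    (t t' : ℕ) (ht : t = t' * q₁) (ht'1 : 1 ≤ t') (ht'2 : t' ≤ q₂ - 1)
    (ht' : Nat.Coprime t' q₂) (z : ℂ) :
    ((z • (1 : Matrix (Fin 2 × Fin n) (Fin 2 × Fin n) ℂ)
        - (blockRot q r) ^ t).det)
      * ((z • (1 : Matrix (Fin 2 × Fin k) (Fin 2 × Fin k) ℂ)
        - (blockRot q s) ^ t).det)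
      = (∏ η ∈ primitiveRoots q₂ ℂ, (z - η)) ^ (q₁ - 1) := by
  have hq₁0 : q₁ ≠ 0 := hq₁.ne_zero
  have hq₂0 : q₂ ≠ 0 := hq₂.ne_zero
  have hq0 : q ≠ 0 := by rw [hq]; positivity
  haveI : NeZero q := ⟨hq0⟩
  haveI : NeZero q₂ := ⟨hq₂0⟩
  set Φ : (Fin n ⊕ Fin k) × Bool → ZMod q := fun p =>
    (if p.2 then ((Sum.elim r s p.1 : ℤ) : ZMod q)
      else -((Sum.elim r s p.1 : ℤ) : ZMod q)) with hΦ
  -- the per-point factor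
  set W : ZMod q → ℂ := fun x => z - eN q (x.val : ℤ) with hW
  have hWm : ∀ m : ℤ, z - eN q m = W (m : ZMod q) := fun m => by
    rw [hW]; simp only []; rw [← eN_cast hq0]
  -- Step 1+2: LHS as a product over the index type
  have step1 : ((z • (1 : Matrix (Fin 2 × Fin n) (Fin 2 × Fin n) ℂ) - (blockRot q r) ^ t).det)
      * ((z • (1 : Matrix (Fin 2 × Fin k) (Fin 2 × Fin k) ℂ) - (blockRot q s) ^ t).det)
      = ∏ p : (Fin n ⊕ Fin k) × Bool, W ((t : ZMod q) * Φ p) := by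
    rw [det_block, det_block]
    rw [Fintype.prod_prod_type]
    rw [Fintype.prod_sum_type]
    congr 1
    · refine Finset.prod_congr rfl fun j _ => ?_
      rw [Fintype.prod_bool]
      have e1 : (t : ZMod q) * Φ (Sum.inl j, true) = ((t * r j : ℤ) : ZMod q) := by
        simp [hΦ]
      have e2 : (t : ZMod q) * Φ (Sum.inl j, false) = ((-(t * r j) : ℤ) : ZMod q) := by
        simp [hΦ]
      rw [e1, e2, ← hWm, ← hWm]
    · refine Finset.prod_congr rfl fun j _ => ?_
      rw [Fintype.prod_bool]
      have e1 : (t : ZMod q) * Φ (Sum.inr j, true) = ((t * s j : ℤ) : ZMod q) := by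
        simp [hΦ]
      have e2 : (t : ZMod q) * Φ (Sum.inr j, false) = ((-(t * s j) : ℤ) : ZMod q) := by
        simp [hΦ]
      rw [e1, e2, ← hWm, ← hWm]
  rw [step1]
  -- Step 3: reindex along the bijection onto units
  have hmem : ∀ p, IsUnit (Φ p) := fun p => by
    have : Φ p ∈ Set.range Φ := Set.mem_range_self p
    rw [hrange] at this
    exact this
  set β : (Fin n ⊕ Fin k) × Bool → (ZMod q)ˣ := fun p => (hmem p).unit with hβ
  have hβval : ∀ p, (β p : ZMod q) = Φ p := fun p => (hmem p).unit_spec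
  have hβbij : Function.Bijective β := by
    constructor
    · intro a b hab
      exact hinj (by rw [← hβval a, ← hβval b, hab])
    · intro u
      have : (u : ZMod q) ∈ Set.range Φ := by rw [hrange]; exact u.isUnit
      obtain ⟨p, hp⟩ := this
      exact ⟨p, Units.ext (by rw [hβval, hp])⟩
  have step3 : ∏ p : (Fin n ⊕ Fin k) × Bool, W ((t : ZMod q) * Φ p)
      = ∏ u : (ZMod q)ˣ, W ((t : ZMod q) * (u : ZMod q)) := by
    refine Fintype.prod_bijective β hβbij _ _ fun p => ?_
    rw [hβval]
  rw [step3]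
  -- Step 4: reduce modulo q₂
  have hdvd : q₂ ∣ q := ⟨q₁, by rw [hq, mul_comm]⟩
  set ψ : (ZMod q)ˣ →* (ZMod q₂)ˣ := ZMod.unitsMap hdvd with hψ
  set D : ZMod q₂ → ℂ := fun y => z - eN q₂ (y.val : ℤ) with hD
  have hDm : ∀ m : ℤ, z - eN q₂ m = D (m : ZMod q₂) := fun m => by
    rw [hD]; simp only []; rw [← eN_cast hq₂0]
  have hq₂pos : 0 < q₂ := Nat.pos_of_ne_zero hq₂0
  have step4 : ∀ u : (ZMod q)ˣ,
      W ((t : ZMod q) * (u : ZMod q)) = D ((t' : ZMod q₂) * ((ψ u : ZMod q₂))) := by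
    intro u
    have h1 : (((t * (u : ZMod q).val : ℤ)) : ZMod q) = (t : ZMod q) * (u : ZMod q) := by
      push_cast
      rw [ZMod.natCast_val, ZMod.cast_id]
    have h2 : ((t : ℤ) * (u : ZMod q).val) = (q₁ : ℤ) * (t' * (u : ZMod q).val) := by
      rw [ht]; push_cast; ring
    have h3 : (((t' * (u : ZMod q).val : ℤ)) : ZMod q₂) = (t' : ZMod q₂) * (ψ u : ZMod q₂) := by
      push_cast
      rw [ZMod.natCast_val]
      simp only [hψ, ZMod.unitsMap, Units.coe_map, MonoidHom.coe_coe, ZMod.castHom_apply]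
    calc W ((t : ZMod q) * (u : ZMod q))
        = z - eN q ((t : ℤ) * (u : ZMod q).val) := by rw [hWm, h1]
      _ = z - eN q₂ ((t' : ℤ) * (u : ZMod q).val) := by
          rw [h2]
          congr 1
          generalize ((t' : ℤ) * (((u : ZMod q).val : ℕ) : ℤ)) = M
          rw [hq]
          exact eN_mul_left hq₁0 M
      _ = D ((t' : ZMod q₂) * (ψ u : ZMod q₂)) := by rw [hDm, h3]
  have hsurj : Function.Surjective ψ := ZMod.unitsMap_surjective hdvd
  -- counting the fibers of ψ
  have hcardq : Fintype.card (ZMod q)ˣ = (q₁ - 1) * (q₂ - 1) := by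
    rw [ZMod.card_units_eq_totient, hq,
      Nat.totient_mul ((Nat.coprime_primes hq₁ hq₂).mpr hne),
      Nat.totient_prime hq₁, Nat.totient_prime hq₂]
  have hcardq₂ : Fintype.card (ZMod q₂)ˣ = q₂ - 1 := by
    rw [ZMod.card_units_eq_totient, Nat.totient_prime hq₂]
  have hconst : ∀ w : (ZMod q₂)ˣ,
      #(Finset.univ.filter fun u : (ZMod q)ˣ => ψ u = w)
        = #(Finset.univ.filter fun u : (ZMod q)ˣ => ψ u = 1) := fun w =>
    MonoidHom.card_fiber_eq_of_mem_range ψ (hsurj w) ⟨1, map_one ψ⟩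
  have hsum : ∑ w : (ZMod q₂)ˣ, #(Finset.univ.filter fun u : (ZMod q)ˣ => ψ u = w)
      = Fintype.card (ZMod q)ˣ := by
    rw [← Finset.card_eq_sum_card_fiberwise (fun u _ => Finset.mem_univ (ψ u)),
      Finset.card_univ]
  have hfib1 : #(Finset.univ.filter fun u : (ZMod q)ˣ => ψ u = 1) = q₁ - 1 := by
    have h := hsum
    rw [Finset.sum_congr rfl (fun w _ => hconst w), Finset.sum_const, Finset.card_univ,
      hcardq₂, hcardq, smul_eq_mul] at h
    have hpos : 0 < q₂ - 1 := by
      have := hq₂.two_le; omega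
    rw [mul_comm (q₁ - 1) (q₂ - 1)] at h
    exact Nat.eq_of_mul_eq_mul_left hpos h
  have hfib : ∀ w : (ZMod q₂)ˣ,
      #(Finset.univ.filter fun u : (ZMod q)ˣ => ψ u = w) = q₁ - 1 := fun w =>
    (hconst w).trans hfib1
  -- collapse the product along ψ
  rw [Finset.prod_congr rfl (fun u _ => step4 u)]
  rw [show (fun u : (ZMod q)ˣ => D ((t' : ZMod q₂) * (ψ u : ZMod q₂)))
      = (fun u : (ZMod q)ˣ => (fun w : (ZMod q₂)ˣ => D ((t' : ZMod q₂) * (w : ZMod q₂))) (ψ u))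
      from rfl]
  rw [Finset.prod_comp (fun w : (ZMod q₂)ˣ => D ((t' : ZMod q₂) * (w : ZMod q₂))) ψ]
  rw [Finset.image_univ_of_surjective hsurj]
  rw [Finset.prod_congr rfl (fun w _ => by rw [hfib w])]
  rw [Finset.prod_pow]
  congr 1
  -- remove the unit t'
  set u' : (ZMod q₂)ˣ := ZMod.unitOfCoprime t' ht' with hu'
  have hu'c : ((u' : ZMod q₂)) = (t' : ZMod q₂) := ZMod.coe_unitOfCoprime t' ht'
  have step6 : ∏ w : (ZMod q₂)ˣ, D ((t' : ZMod q₂) * (w : ZMod q₂))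
      = ∏ w : (ZMod q₂)ˣ, D (w : ZMod q₂) := by
    refine Fintype.prod_bijective (fun w => u' * w) (Group.mulLeft_bijective u') _ _ fun w => ?_
    rw [Units.val_mul, hu'c]
  rw [step6]
  -- identify with the primitive roots
  set ζ : ℂ := Complex.exp (2 * Real.pi * Complex.I / q₂) with hζdef
  have hζ : IsPrimitiveRoot ζ q₂ := Complex.isPrimitiveRoot_exp q₂ hq₂0
  have hDζ : ∀ w : (ZMod q₂)ˣ, D (w : ZMod q₂) = z - ζ ^ ((w : ZMod q₂)).val := by
    intro w
    rw [hD]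
    simp only []
    congr 1
    rw [hζdef, eN, ← Complex.exp_nat_mul]
    congr 1
    push_cast
    ring
  refine Finset.prod_bij (fun w _ => ζ ^ ((w : ZMod q₂)).val) ?_ ?_ ?_ ?_
  · intro w _
    exact (mem_primitiveRoots hq₂pos).2
      ((hζ.pow_iff_coprime hq₂pos _).2 (ZMod.val_coe_unit_coprime w))
  · intro a _ b _ hab
    have := hζ.pow_inj (ZMod.val_lt _) (ZMod.val_lt _) hab
    exact Units.ext (ZMod.val_injective q₂ this)
  · intro η hη
    have hη' : IsPrimitiveRoot η q₂ := (mem_primitiveRoots hq₂pos).1 hη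
    obtain ⟨i, hik, hpow⟩ := hζ.eq_pow_of_pow_eq_one hη'.pow_eq_one
    have hcop : Nat.Coprime i q₂ :=
      (hζ.pow_iff_coprime hq₂pos i).1 (hpow ▸ hη')
    refine ⟨ZMod.unitOfCoprime i hcop, Finset.mem_univ _, ?_⟩
    show ζ ^ ((ZMod.unitOfCoprime i hcop : (ZMod q₂)ˣ) : ZMod q₂).val = η
    rw [ZMod.coe_unitOfCoprime, ZMod.val_natCast_of_lt hik]
    exact hpow
  · intro w _
    exact hDζ w
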